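/- Under exclusion/independence, for any function h : Z → ℝ, the 2SLS-like estimand satisfies Cov(Y, h(Z)) / Cov(D, h(Z)) = ∑_g w_g Δ_g, where w_g = P(G = g)·Cov(D_g(Z), h(Z)) / ∑_{g'} P(G = g')·Cov(D_{g'}(Z), h(Z)) and Δ_g = E[Y(1) − Y(0) | G = g], provided the denominator Cov(D, h(Z)) is nonzero. -/

import Mathlib

open MeasureTheory ProbabilityTheory

/-- Covariance of two real random variables. -/
noncomputable def cov {Ω : Type*} [MeasurableSpace Ω] (μ : Measure Ω)
    (X W : Ω → ℝ) : ℝ :=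
  (∫ ω, X ω * W ω ∂μ) - (∫ ω, X ω ∂μ) * (∫ ω, W ω ∂μ)

/-- Proposition 5 (2SLS-like estimands): under exclusion/independence,
`Cov(Y, h(Z))/Cov(D, h(Z)) = ∑_g w_g Δ_g` with
`w_g = P(G=g)·Cov(D_g(Z),h(Z)) / ∑_{g'} P(G=g')·Cov(D_{g'}(Z),h(Z))` and
`Δ_g = E[Y(1)−Y(0)|G=g]`, provided `Cov(D, h(Z)) ≠ 0`. -/
theorem stmt11 {Ω : Type*} [MeasurableSpace Ω] (μ : Measure Ω) [IsProbabilityMeasure μ]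
    {ζ γ : Type*} [MeasurableSpace ζ] [MeasurableSpace γ]
    [Fintype ζ] [Fintype γ] [MeasurableSingletonClass ζ] [MeasurableSingletonClass γ]
    (Z : Ω → ζ) (G : Ω → γ) (hZm : Measurable Z) (hGm : Measurable G)
    (Dg : γ → ζ → ℝ) (hDg01 : ∀ g z, Dg g z = 0 ∨ Dg g z = 1)
    (Y1 Y0 : Ω → ℝ) (hY1m : Measurable Y1) (hY0m : Measurable Y0)
    (hY1i : Integrable Y1 μ) (hY0i : Integrable Y0 μ)
    (hindep : IndepFun (fun ω => (Y1 ω, Y0 ω, G ω)) Z μ)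
    (h : ζ → ℝ)
    (hden : cov μ (fun ω => Dg (G ω) (Z ω)) (fun ω => h (Z ω)) ≠ 0) :
    cov μ (fun ω => Dg (G ω) (Z ω) * Y1 ω + (1 - Dg (G ω) (Z ω)) * Y0 ω)
        (fun ω => h (Z ω)) /
      cov μ (fun ω => Dg (G ω) (Z ω)) (fun ω => h (Z ω)) =
    ∑ g, ((μ {ω | G ω = g}).toReal * cov μ (fun ω => Dg g (Z ω)) (fun ω => h (Z ω)) /
            ∑ g', (μ {ω | G ω = g'}).toReal *
              cov μ (fun ω => Dg g' (Z ω)) (fun ω => h (Z ω))) *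
      ((μ {ω | G ω = g}).toReal⁻¹ * ∫ ω in {ω | G ω = g}, (Y1 ω - Y0 ω) ∂μ) := by
  classical
  -- basic measurability/integrability for functions of Z
  have hMu : ∀ u : ζ → ℝ, Measurable fun ω => u (Z ω) :=
    fun u => (measurable_of_countable u).comp hZm
  have hIu : ∀ u : ζ → ℝ, Integrable (fun ω => u (Z ω)) μ := by
    intro u
    refine ⟨(hMu u).aestronglyMeasurable, HasFiniteIntegral.of_bounded (C := ∑ z, ‖u z‖) ?_⟩
    exact ae_of_all _ fun ω =>
      Finset.single_le_sum (f := fun z => ‖u z‖) (fun _ _ => norm_nonneg _) (Finset.mem_univ _)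
  have hIbmul : ∀ (F : Ω → ℝ), Integrable F μ → ∀ u : ζ → ℝ,
      Integrable (fun ω => F ω * u (Z ω)) μ := by
    intro F hF u
    have := hF.bdd_mul (hMu u).aestronglyMeasurable
      (c := ∑ z, ‖u z‖) (ae_of_all _ fun ω =>
        Finset.single_le_sum (f := fun z => ‖u z‖) (fun _ _ => norm_nonneg _) (Finset.mem_univ _))
    simpa [mul_comm] using this
  -- key factorization lemma
  have keyA : ∀ (f : ℝ × ℝ × γ → ℝ), Measurable f →
      Integrable (fun ω => f (Y1 ω, Y0 ω, G ω)) μ → ∀ u : ζ → ℝ,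
      ∫ ω, f (Y1 ω, Y0 ω, G ω) * u (Z ω) ∂μ =
        (∫ ω, f (Y1 ω, Y0 ω, G ω) ∂μ) * ∫ ω, u (Z ω) ∂μ := by
    intro f hf hfi u
    have hi : IndepFun (fun ω => f (Y1 ω, Y0 ω, G ω)) (fun ω => u (Z ω)) μ :=
      hindep.comp hf (measurable_of_countable u)
    exact hi.integral_mul_eq_mul_integral hfi.aestronglyMeasurable (hIu u).aestronglyMeasurable
  set p : γ → ℝ := fun g => (μ {ω | G ω = g}).toReal with hp
  set c : γ → ℝ := fun g => cov μ (fun ω => Dg g (Z ω)) (fun ω => h (Z ω)) with hc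
  set A : γ → ℝ := fun g => ∫ ω in {ω | G ω = g}, (Y1 ω - Y0 ω) ∂μ with hA
  have hGset : ∀ g : γ, MeasurableSet {ω | G ω = g} := fun g =>
    hGm (measurableSet_singleton g)
  -- indicator functions
  have hindm : ∀ g : γ, Measurable fun ω => (if G ω = g then (1:ℝ) else 0) := by
    intro g
    exact Measurable.ite (hGset g) measurable_const measurable_const
  have hindInt : ∀ g : γ, Integrable (fun ω => (if G ω = g then (1:ℝ) else 0)) μ := by
    intro g
    refine ⟨(hindm g).aestronglyMeasurable, HasFiniteIntegral.of_bounded (C := 1) ?_⟩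
    exact ae_of_all _ fun ω => by by_cases hgg : G ω = g <;> simp [hgg]
  have hindI : ∀ g : γ, ∫ ω, (if G ω = g then (1:ℝ) else 0) ∂μ = p g := by
    intro g
    have : (fun ω => (if G ω = g then (1:ℝ) else 0)) =
        Set.indicator {ω | G ω = g} (fun _ => (1:ℝ)) := by
      ext ω; simp [Set.indicator_apply]
    rw [this, integral_indicator (hGset g)]
    simp [hp, measureReal_def]
  -- f2 : indicator times (Y1 - Y0)
  have hf2Int : ∀ g : γ, Integrable (fun ω => (if G ω = g then (1:ℝ) else 0) * (Y1 ω - Y0 ω)) μ := by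
    intro g
    exact (hY1i.sub hY0i).bdd_mul (hindm g).aestronglyMeasurable
      (c := 1) (ae_of_all _ fun ω => by by_cases hgg : G ω = g <;> simp [hgg])
  have hf2I : ∀ g : γ, ∫ ω, (if G ω = g then (1:ℝ) else 0) * (Y1 ω - Y0 ω) ∂μ = A g := by
    intro g
    have : (fun ω => (if G ω = g then (1:ℝ) else 0) * (Y1 ω - Y0 ω)) =
        Set.indicator {ω | G ω = g} (fun ω => Y1 ω - Y0 ω) := by
      ext ω; by_cases hgg : G ω = g <;> simp [Set.indicator_apply, hgg]
    rw [this, integral_indicator (hGset g)]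
  -- factorization for indicators
  have keyInd : ∀ (g : γ) (u : ζ → ℝ),
      ∫ ω, (if G ω = g then (1:ℝ) else 0) * u (Z ω) ∂μ = p g * ∫ ω, u (Z ω) ∂μ := by
    intro g u
    have hf : Measurable fun q : ℝ × ℝ × γ => (if q.2.2 = g then (1:ℝ) else 0) := by
      exact Measurable.ite ((measurable_snd.comp measurable_snd) (measurableSet_singleton g))
        measurable_const measurable_const
    have := keyA (fun q : ℝ × ℝ × γ => (if q.2.2 = g then (1:ℝ) else 0)) hf (hindInt g) u
    rw [this, hindI g]
  have keyF2 : ∀ (g : γ) (u : ζ → ℝ),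
      ∫ ω, ((if G ω = g then (1:ℝ) else 0) * (Y1 ω - Y0 ω)) * u (Z ω) ∂μ
        = A g * ∫ ω, u (Z ω) ∂μ := by
    intro g u
    have hf : Measurable fun q : ℝ × ℝ × γ =>
        (if q.2.2 = g then (1:ℝ) else 0) * (q.1 - q.2.1) := by
      exact (Measurable.ite ((measurable_snd.comp measurable_snd) (measurableSet_singleton g))
        measurable_const measurable_const).mul (measurable_fst.sub (measurable_fst.comp measurable_snd))
    have := keyA (fun q : ℝ × ℝ × γ => (if q.2.2 = g then (1:ℝ) else 0) * (q.1 - q.2.1))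
      hf (hf2Int g) u
    rw [this, hf2I g]
  have keyY0 : ∀ u : ζ → ℝ,
      ∫ ω, Y0 ω * u (Z ω) ∂μ = (∫ ω, Y0 ω ∂μ) * ∫ ω, u (Z ω) ∂μ := by
    intro u
    exact keyA (fun q : ℝ × ℝ × γ => q.2.1) (measurable_fst.comp measurable_snd) hY0i u
  -- pointwise decompositions
  have hDpt : ∀ (ω) (u : ζ → ℝ), Dg (G ω) (Z ω) * u (Z ω) =
      ∑ g, (if G ω = g then (1:ℝ) else 0) * (Dg g (Z ω) * u (Z ω)) := by
    intro ω u
    simp [ite_mul, Finset.sum_ite_eq]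
  -- expand cov D H
  have hS : cov μ (fun ω => Dg (G ω) (Z ω)) (fun ω => h (Z ω)) = ∑ g, p g * c g := by
    have e1 : ∫ ω, Dg (G ω) (Z ω) * h (Z ω) ∂μ =
        ∑ g, p g * ∫ ω, Dg g (Z ω) * h (Z ω) ∂μ := by
      rw [show (fun ω => Dg (G ω) (Z ω) * h (Z ω)) =
          (fun ω => ∑ g, (if G ω = g then (1:ℝ) else 0) * (Dg g (Z ω) * h (Z ω))) from
        funext fun ω => hDpt ω h]
      rw [integral_finset_sum _ fun g _ => hIbmul _ (hindInt g) (fun z => Dg g z * h z)]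
      exact Finset.sum_congr rfl fun g _ => keyInd g (fun z => Dg g z * h z)
    have e2 : ∫ ω, Dg (G ω) (Z ω) ∂μ = ∑ g, p g * ∫ ω, Dg g (Z ω) ∂μ := by
      have : (fun ω => Dg (G ω) (Z ω)) =
          (fun ω => ∑ g, (if G ω = g then (1:ℝ) else 0) * (Dg g (Z ω) * 1)) := by
        funext ω; simpa using hDpt ω (fun _ => 1)
      rw [this, integral_finset_sum _ fun g _ => hIbmul _ (hindInt g) (fun z => Dg g z * 1)]
      refine Finset.sum_congr rfl fun g _ => ?_
      simpa using keyInd g (fun z => Dg g z * 1)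
    have expandS : ∑ g, p g * c g =
        (∑ g, p g * ∫ ω, Dg g (Z ω) * h (Z ω) ∂μ) -
          (∑ g, p g * ∫ ω, Dg g (Z ω) ∂μ) * ∫ ω, h (Z ω) ∂μ := by
      rw [Finset.sum_mul, ← Finset.sum_sub_distrib]
      exact Finset.sum_congr rfl fun g _ => by simp only [hc, cov]; ring
    simp only [cov, e1, e2]
    rw [expandS]
  -- expand cov Y H
  have hN : cov μ (fun ω => Dg (G ω) (Z ω) * Y1 ω + (1 - Dg (G ω) (Z ω)) * Y0 ω)
      (fun ω => h (Z ω)) = ∑ g, A g * c g := by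
    have hYpt : ∀ (ω) (u : ζ → ℝ),
        (Dg (G ω) (Z ω) * Y1 ω + (1 - Dg (G ω) (Z ω)) * Y0 ω) * u (Z ω) =
        (∑ g, ((if G ω = g then (1:ℝ) else 0) * (Y1 ω - Y0 ω)) * (Dg g (Z ω) * u (Z ω)))
          + Y0 ω * u (Z ω) := by
      intro ω u
      have : ∑ g, ((if G ω = g then (1:ℝ) else 0) * (Y1 ω - Y0 ω)) * (Dg g (Z ω) * u (Z ω))
          = (Y1 ω - Y0 ω) * (Dg (G ω) (Z ω) * u (Z ω)) := by
        simp [ite_mul, Finset.sum_ite_eq]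
      rw [this]; ring
    have hintg : ∀ (g : γ) (u : ζ → ℝ), Integrable
        (fun ω => ((if G ω = g then (1:ℝ) else 0) * (Y1 ω - Y0 ω)) * (Dg g (Z ω) * u (Z ω))) μ :=
      fun g u => hIbmul _ (hf2Int g) (fun z => Dg g z * u z)
    have e1 : ∫ ω, (Dg (G ω) (Z ω) * Y1 ω + (1 - Dg (G ω) (Z ω)) * Y0 ω) * h (Z ω) ∂μ =
        (∑ g, A g * ∫ ω, Dg g (Z ω) * h (Z ω) ∂μ) +
          (∫ ω, Y0 ω ∂μ) * ∫ ω, h (Z ω) ∂μ := by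
      rw [show (fun ω => (Dg (G ω) (Z ω) * Y1 ω + (1 - Dg (G ω) (Z ω)) * Y0 ω) * h (Z ω)) =
          (fun ω => (∑ g, ((if G ω = g then (1:ℝ) else 0) * (Y1 ω - Y0 ω)) *
            (Dg g (Z ω) * h (Z ω))) + Y0 ω * h (Z ω)) from funext fun ω => hYpt ω h]
      rw [integral_add (integrable_finset_sum _ fun g _ => hintg g h) (hIbmul _ hY0i h),
        integral_finset_sum _ fun g _ => hintg g h, keyY0 h]
      exact congrArg (· + _) (Finset.sum_congr rfl fun g _ => keyF2 g (fun z => Dg g z * h z))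
    have e2 : ∫ ω, (Dg (G ω) (Z ω) * Y1 ω + (1 - Dg (G ω) (Z ω)) * Y0 ω) ∂μ =
        (∑ g, A g * ∫ ω, Dg g (Z ω) ∂μ) + ∫ ω, Y0 ω ∂μ := by
      have hpt2 : ∀ ω, Dg (G ω) (Z ω) * Y1 ω + (1 - Dg (G ω) (Z ω)) * Y0 ω =
          (∑ g, ((if G ω = g then (1:ℝ) else 0) * (Y1 ω - Y0 ω)) * Dg g (Z ω)) + Y0 ω := by
        intro ω
        have : ∑ g, ((if G ω = g then (1:ℝ) else 0) * (Y1 ω - Y0 ω)) * Dg g (Z ω)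
            = (Y1 ω - Y0 ω) * Dg (G ω) (Z ω) := by
          simp [ite_mul, Finset.sum_ite_eq]
        rw [this]; ring
      rw [show (fun ω => Dg (G ω) (Z ω) * Y1 ω + (1 - Dg (G ω) (Z ω)) * Y0 ω) =
          (fun ω => (∑ g, ((if G ω = g then (1:ℝ) else 0) * (Y1 ω - Y0 ω)) * Dg g (Z ω))
            + Y0 ω) from funext hpt2]
      rw [integral_add (integrable_finset_sum _ fun g _ => hIbmul _ (hf2Int g) (Dg g)) hY0i,
        integral_finset_sum _ fun g _ => hIbmul _ (hf2Int g) (Dg g)]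
      exact congrArg (· + _) (Finset.sum_congr rfl fun g _ => keyF2 g (Dg g))
    have expandN : ∑ g, A g * c g =
        (∑ g, A g * ∫ ω, Dg g (Z ω) * h (Z ω) ∂μ) -
          (∑ g, A g * ∫ ω, Dg g (Z ω) ∂μ) * ∫ ω, h (Z ω) ∂μ := by
      rw [Finset.sum_mul, ← Finset.sum_sub_distrib]
      exact Finset.sum_congr rfl fun g _ => by simp only [hc, cov]; ring
    simp only [cov, e1, e2]
    rw [expandN]
    ring
  -- final algebra
  rw [hN, hS]
  have hS' : (∑ g, p g * c g) ≠ 0 := by rwa [hS] at hden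
  rw [Finset.sum_div]
  refine Finset.sum_congr rfl fun g _ => ?_
  show A g * c g / (∑ g', p g' * c g') = p g * c g / (∑ g', p g' * c g') * ((p g)⁻¹ * A g)
  by_cases hpg : p g = 0
  · have hA0 : A g = 0 := by
      have : μ {ω | G ω = g} = 0 := by
        have := (ENNReal.toReal_eq_zero_iff _).mp hpg
        exact this.resolve_right (measure_ne_top μ _)
      simp [hA, Measure.restrict_eq_zero.mpr this]
    simp [hpg, hA0]
  · field_simp
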